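/- The dual cone of C = {x ∈ ℝ^r : eᵀx ≥ √(r-1)·‖x‖₂} is C* = {x ∈ ℝ^r : eᵀx ≥ ‖x‖₂}. -/

import Mathlib

noncomputable def enorm {r : ℕ} (x : Fin r → ℝ) : ℝ := Real.sqrt (∑ i, (x i) ^ 2)

def sscCone (r : ℕ) : Set (Fin r → ℝ) :=
  {x | Real.sqrt ((r : ℝ) - 1) * _root_.enorm x ≤ ∑ i, x i}

def dualCone {r : ℕ} (K : Set (Fin r → ℝ)) : Set (Fin r → ℝ) :=
  {x | ∀ z ∈ K, 0 ≤ ∑ i, x i * z i}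

-- helper: affine-in-y sums
lemma sum_abc {r : ℕ} (y : Fin r → ℝ) (a b c : ℝ) :
    ∑ i, (a + b * y i + c * (y i) ^ 2) =
      (r : ℝ) * a + b * (∑ i, y i) + c * (∑ i, (y i) ^ 2) := by
  rw [Finset.sum_add_distrib, Finset.sum_add_distrib, ← Finset.mul_sum, ← Finset.mul_sum,
    Finset.sum_const, Finset.card_univ, Fintype.card_fin, nsmul_eq_mul]

set_option maxHeartbeats 1000000 in
/-- The dual cone of `C = {x : eᵀx ≥ √(r-1)‖x‖₂}` is `{x : eᵀx ≥ ‖x‖₂}`. -/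
theorem dual_sscCone {r : ℕ} (hr : 2 ≤ r) :
    dualCone (sscCone r) = {x : Fin r → ℝ | _root_.enorm x ≤ ∑ i, x i} := by
  have hr2 : (2:ℝ) ≤ (r:ℝ) := by exact_mod_cast hr
  have hr1 : (1:ℝ) ≤ (r:ℝ) - 1 := by linarith
  have hr1pos : (0:ℝ) < (r:ℝ) - 1 := by linarith
  have hr0 : (0:ℝ) < (r:ℝ) := by linarith
  ext y
  simp only [dualCone, sscCone, Set.mem_setOf_eq]
  set S := ∑ i, y i with hS
  set N := ∑ i, (y i) ^ 2 with hN
  have hNnn : 0 ≤ N := Finset.sum_nonneg fun i _ => sq_nonneg _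
  have hCSy : S ^ 2 ≤ N * (r:ℝ) := by
    have h := Finset.sum_mul_sq_le_sq_mul_sq Finset.univ y (fun _ => (1:ℝ))
    simpa [← hS, ← hN, Finset.card_univ] using h
  constructor
  · -- dual cone ⊆ {_root_.enorm y ≤ S}
    intro h
    -- test with e : get 0 ≤ S
    have hSnn : 0 ≤ S := by
      have he : (fun _ : Fin r => (1:ℝ)) ∈ {x : Fin r → ℝ | Real.sqrt ((r : ℝ) - 1) * _root_.enorm x ≤ ∑ i, x i} := by
        simp only [Set.mem_setOf_eq, _root_.enorm]
        have h1 : ∑ i : Fin r, ((1:ℝ)) ^ 2 = (r:ℝ) := by simp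
        have h2 : ∑ i : Fin r, (1:ℝ) = (r:ℝ) := by simp
        rw [h1, h2, ← Real.sqrt_mul (le_of_lt hr1pos)]
        calc Real.sqrt (((r:ℝ) - 1) * (r:ℝ)) ≤ Real.sqrt ((r:ℝ)^2) := by
              apply Real.sqrt_le_sqrt; nlinarith
          _ = (r:ℝ) := Real.sqrt_sq (le_of_lt hr0)
      have := h _ he
      simpa [← hS] using this
    -- main argument: N ≤ S^2
    have hkey : N ≤ S ^ 2 := by
      set R := (r:ℝ) * N - S ^ 2 with hRdef
      have hRnn : 0 ≤ R := by nlinarith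
      rcases eq_or_lt_of_le hRnn with hR0 | hRpos
      · nlinarith
      · set t := Real.sqrt ((r:ℝ)^2 / (((r:ℝ) - 1) * R)) with htdef
        have htnn : 0 ≤ t := Real.sqrt_nonneg _
        have ht2 : t ^ 2 = (r:ℝ)^2 / (((r:ℝ) - 1) * R) := by
          rw [htdef, Real.sq_sqrt]; positivity
        have ht2' : t ^ 2 * (((r:ℝ) - 1) * R) = (r:ℝ)^2 := by
          rw [ht2]; field_simp
        set z : Fin r → ℝ := fun i => (r:ℝ) - t * ((r:ℝ) * y i - S) with hzdef
        have hz1 : ∑ i, z i = (r:ℝ) ^ 2 := by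
          have e1 : ∀ i, z i = (((r:ℝ) + t * S) + (-(t * (r:ℝ))) * y i + 0 * (y i)^2) := by
            intro i; simp only [hzdef]; ring
          rw [Finset.sum_congr rfl fun i _ => e1 i, sum_abc y, ← hS, ← hN]; ring
        have hz2 : ∑ i, (z i) ^ 2 = (r:ℝ) ^ 4 / ((r:ℝ) - 1) := by
          have e1 : ∀ i, (z i) ^ 2 = (((r:ℝ) + t * S)^2 + (-(2 * ((r:ℝ) + t * S) * t * (r:ℝ))) * y i + (t^2 * (r:ℝ)^2) * (y i)^2) := by
            intro i; simp only [hzdef]; ring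
          rw [Finset.sum_congr rfl fun i _ => e1 i, sum_abc y, ← hS, ← hN]
          have : (r:ℝ) * ((r:ℝ) + t * S)^2 + (-(2 * ((r:ℝ) + t * S) * t * (r:ℝ))) * S + (t^2 * (r:ℝ)^2) * N
              = (r:ℝ)^3 + t^2 * ((r:ℝ) * R) := by rw [hRdef]; ring
          rw [this]
          have h2 : t ^ 2 * ((r:ℝ) * R) = (r:ℝ)^3 / ((r:ℝ) - 1) := by
            field_simp at ht2' ⊢; nlinarith [ht2']
          rw [h2]; field_simp; ring
        have hz3 : ∑ i, y i * z i = (r:ℝ) * S - t * R := by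
          have e1 : ∀ i, y i * z i = ((0:ℝ) + ((r:ℝ) + t * S) * y i + (-(t * (r:ℝ))) * (y i)^2) := by
            intro i; simp only [hzdef]; ring
          rw [Finset.sum_congr rfl fun i _ => e1 i, sum_abc y, ← hS, ← hN, hRdef]; ring
        have hmem : z ∈ {x : Fin r → ℝ | Real.sqrt ((r : ℝ) - 1) * _root_.enorm x ≤ ∑ i, x i} := by
          simp only [Set.mem_setOf_eq, _root_.enorm]
          rw [hz1, hz2, ← Real.sqrt_mul (le_of_lt hr1pos)]
          have : ((r:ℝ) - 1) * ((r:ℝ)^4 / ((r:ℝ) - 1)) = ((r:ℝ)^2)^2 := by field_simp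
          rw [this, Real.sqrt_sq (by positivity)]
        have hd := h z hmem
        rw [hz3] at hd
        clear hz1 hz2 hz3 hmem h hzdef
        clear_value z
        clear z
        clear_value t R N S
        -- t * R ≤ r * S, square it
        have htR : t * R ≤ (r:ℝ) * S := by linarith
        have htRnn : 0 ≤ t * R := mul_nonneg htnn (le_of_lt hRpos)
        have hsq : (t * R) ^ 2 ≤ ((r:ℝ) * S) ^ 2 := by
          apply pow_le_pow_left₀ htRnn htR
        -- (t*R)^2 * (r-1) = r^2 * R ; so r^2 * R ≤ (r-1) * r^2 * S^2
        have hkey2 : (r:ℝ)^2 * R ≤ ((r:ℝ) - 1) * ((r:ℝ) * S)^2 := by nlinarith [ht2', hsq]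
        rw [hRdef] at hkey2
        have h3 : (0:ℝ) < (r:ℝ)^3 := by positivity
        nlinarith [hkey2, h3]
    calc _root_.enorm y = Real.sqrt N := rfl
      _ ≤ Real.sqrt (S ^ 2) := Real.sqrt_le_sqrt hkey
      _ = S := Real.sqrt_sq hSnn
  · -- {_root_.enorm y ≤ S} ⊆ dual cone
    intro hy z hz
    set Sz := ∑ i, z i with hSz
    set Nz := ∑ i, (z i) ^ 2 with hNz
    have hNznn : 0 ≤ Nz := Finset.sum_nonneg fun i _ => sq_nonneg _
    have hCSz : Sz ^ 2 ≤ Nz * (r:ℝ) := by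
      have h := Finset.sum_mul_sq_le_sq_mul_sq Finset.univ z (fun _ => (1:ℝ))
      simpa [← hSz, ← hNz, Finset.card_univ] using h
    have hSnn : 0 ≤ S := le_trans (Real.sqrt_nonneg _) hy
    have hNS : N ≤ S ^ 2 := by
      have h1 : (Real.sqrt N) ^ 2 ≤ S ^ 2 := pow_le_pow_left₀ (Real.sqrt_nonneg _) hy 2
      rwa [Real.sq_sqrt hNnn] at h1
    have hSznn : 0 ≤ Sz := le_trans (mul_nonneg (Real.sqrt_nonneg _) (Real.sqrt_nonneg _)) hz
    have hNzS : ((r:ℝ) - 1) * Nz ≤ Sz ^ 2 := by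
      have h1 : (Real.sqrt ((r:ℝ) - 1) * _root_.enorm z) ^ 2 ≤ Sz ^ 2 :=
        pow_le_pow_left₀ (mul_nonneg (Real.sqrt_nonneg _) (Real.sqrt_nonneg _)) hz 2
      rwa [mul_pow, Real.sq_sqrt (le_of_lt hr1pos), _root_.enorm, Real.sq_sqrt hNznn] at h1
    set D := ∑ i, y i * z i with hD
    -- Cauchy-Schwarz on u i = r y i - S, v i = r z i - Sz
    have hCS := Finset.sum_mul_sq_le_sq_mul_sq Finset.univ
      (fun i => (r:ℝ) * y i - S) (fun i => (r:ℝ) * z i - Sz)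
    have euv : ∑ i, ((r:ℝ) * y i - S) * ((r:ℝ) * z i - Sz)
        = (r:ℝ)^2 * D - (r:ℝ) * S * Sz := by
      have e1 : ∀ i, ((r:ℝ) * y i - S) * ((r:ℝ) * z i - Sz)
          = (S * Sz + (-((r:ℝ) * Sz)) * y i + 0 * (y i)^2) + ((-(r:ℝ) * S) * z i + (r:ℝ)^2 * (y i * z i)) := by
        intro i; ring
      rw [Finset.sum_congr rfl fun i _ => e1 i, Finset.sum_add_distrib, sum_abc y,
        Finset.sum_add_distrib, ← Finset.mul_sum, ← Finset.mul_sum, ← hS, ← hN, ← hSz, ← hD]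
      ring
    have eu : ∑ i, ((r:ℝ) * y i - S) ^ 2 = (r:ℝ)^2 * N - (r:ℝ) * S ^ 2 := by
      have e1 : ∀ i, ((r:ℝ) * y i - S) ^ 2 = (S^2 + (-(2 * (r:ℝ) * S)) * y i + (r:ℝ)^2 * (y i)^2) := by
        intro i; ring
      rw [Finset.sum_congr rfl fun i _ => e1 i, sum_abc y, ← hS, ← hN]; ring
    have ev : ∑ i, ((r:ℝ) * z i - Sz) ^ 2 = (r:ℝ)^2 * Nz - (r:ℝ) * Sz ^ 2 := by
      have e1 : ∀ i, ((r:ℝ) * z i - Sz) ^ 2 = (Sz^2 + (-(2 * (r:ℝ) * Sz)) * z i + (r:ℝ)^2 * (z i)^2) := by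
        intro i; ring
      rw [Finset.sum_congr rfl fun i _ => e1 i, sum_abc z, ← hSz, ← hNz]; ring
    rw [euv, eu, ev] at hCS
    clear euv eu ev hy hz hD hS hN hSz hNz
    clear_value D S N Sz Nz
    -- chain of inequalities
    have hA : 0 ≤ (r:ℝ)^2 * N - (r:ℝ) * S ^ 2 := by nlinarith
    have hB : 0 ≤ (r:ℝ)^2 * Nz - (r:ℝ) * Sz ^ 2 := by nlinarith
    have hA2 : (r:ℝ)^2 * N - (r:ℝ) * S ^ 2 ≤ (r:ℝ) * ((r:ℝ) - 1) * S ^ 2 := by nlinarith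
    have hB2 : ((r:ℝ) - 1) * ((r:ℝ)^2 * Nz - (r:ℝ) * Sz ^ 2) ≤ (r:ℝ) * Sz ^ 2 := by nlinarith
    have step1 : ((r:ℝ) - 1) * ((r:ℝ)^2 * D - (r:ℝ) * S * Sz) ^ 2
        ≤ ((r:ℝ)^2 * N - (r:ℝ) * S ^ 2) * ((r:ℝ) * Sz ^ 2) := by nlinarith
    have step2 : ((r:ℝ)^2 * N - (r:ℝ) * S ^ 2) * ((r:ℝ) * Sz ^ 2)
        ≤ ((r:ℝ) - 1) * ((r:ℝ) * S * Sz) ^ 2 := by nlinarith [mul_le_mul_of_nonneg_right hA2 (by positivity : (0:ℝ) ≤ (r:ℝ) * Sz ^ 2)]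
    have hfin : ((r:ℝ)^2 * D - (r:ℝ) * S * Sz) ^ 2 ≤ ((r:ℝ) * S * Sz) ^ 2 := by
      nlinarith [step1, step2]
    by_contra hD0
    push_neg at hD0
    have h1 : 0 ≤ S * Sz := mul_nonneg hSnn hSznn
    have h2 : (0:ℝ) < (r:ℝ)^3 := by positivity
    have h3 : (r:ℝ)^4 * D^2 ≤ 2*(r:ℝ)^3*D*(S*Sz) := by nlinarith [hfin]
    have h4 : 2*(r:ℝ)^3*D*(S*Sz) ≤ 0 := by nlinarith [mul_nonneg (le_of_lt h2) h1]
    have hD' : D ≠ 0 := ne_of_lt hD0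
    have h5 : 0 < (r:ℝ)^4 * D^2 := by positivity
    linarith
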